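/- The number of partitions of n into parts of size at most k equals n^{k−1}/(k!·(k−1)!) + O(n^{k−2}), for fixed k ≥ 2. -/

import Mathlib

open Finset

def Nk (k n : ℕ) : ℕ := (Finset.univ.filter fun p : n.Partition => ∀ i ∈ p.parts, i ≤ k).card

lemma ncard_eq_Nk (k n : ℕ) : Set.ncard {p : n.Partition | ∀ i ∈ p.parts, i ≤ k} = Nk k n := by
  have : {p : n.Partition | ∀ i ∈ p.parts, i ≤ k} =
      ↑(Finset.univ.filter fun p : n.Partition => ∀ i ∈ p.parts, i ≤ k) := by
    ext p; simp
  rw [this, Set.ncard_coe_finset, Nk]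

lemma Nk_zero (k : ℕ) : Nk k 0 = 1 := by
  rw [Nk, Finset.filter_true_of_mem (by simp)]
  simp

lemma Nk_one (n : ℕ) : Nk 1 n = 1 := by
  rw [Nk, Finset.card_eq_one]
  refine ⟨⟨Multiset.replicate n 1, fun h => by simp [Multiset.eq_of_mem_replicate h], by simp⟩, ?_⟩
  ext p
  simp only [mem_filter, mem_univ, true_and, Finset.mem_singleton]
  constructor
  · intro h
    have hrep : p.parts = Multiset.replicate p.parts.card 1 :=
      Multiset.eq_replicate_card.2 fun x hx => le_antisymm (h x hx) (p.parts_pos hx)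
    have hc : Multiset.card p.parts = n := by
      have hs := p.parts_sum
      conv_lhs at hs => rw [hrep]
      simpa using hs
    ext1
    rw [hrep, hc]
  · rintro rfl
    intro i hi
    exact le_of_eq (Multiset.eq_of_mem_replicate hi)


lemma msum_le {s t : Multiset ℕ} (h : s ≤ t) : s.sum ≤ t.sum := by
  obtain ⟨u, rfl⟩ := Multiset.le_iff_exists_add.mp h
  simp

lemma Nk_succ (k n : ℕ) :
    Nk (k+1) n = ∑ m ∈ range (n/(k+1)+1), Nk k (n - (k+1)*m) := by
  rw [Nk]
  rw [Finset.card_eq_sum_card_fiberwise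
    (f := fun p : n.Partition => p.parts.count (k+1)) (t := range (n/(k+1)+1)) ?hf]
  case hf =>
    intro p _
    rw [Finset.mem_coe, mem_range, Nat.lt_succ_iff, Nat.le_div_iff_mul_le (Nat.succ_pos k)]
    calc p.parts.count (k+1) * (k+1) = (Multiset.replicate (p.parts.count (k+1)) (k+1)).sum := by
          simp [Multiset.sum_replicate]
      _ ≤ p.parts.sum := msum_le (Multiset.le_count_iff_replicate_le.mp le_rfl)
      _ = n := p.parts_sum
  refine Finset.sum_congr rfl fun m hm => ?_
  have hmn : (k+1) * m ≤ n := by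
    rw [mem_range, Nat.lt_succ_iff] at hm
    calc (k+1)*m ≤ (k+1)*(n/(k+1)) := Nat.mul_le_mul_left _ hm
      _ ≤ n := Nat.mul_div_le n (k+1)
  rw [Nk]
  refine Finset.card_bij'
    (i := fun p hp => (⟨p.parts.filter (· ≠ k+1), ?ppos, ?psum⟩ : (n - (k+1)*m).Partition))
    (j := fun q hq => (⟨q.parts + Multiset.replicate m (k+1), ?qpos, ?qsum⟩ : n.Partition))
    ?hi ?hj ?li ?ri
  case ppos =>
    intro i hi
    exact p.parts_pos (Multiset.mem_of_mem_filter hi)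
  case psum =>
    simp only [mem_filter, mem_univ, true_and] at hp
    obtain ⟨-, hcnt⟩ := hp
    have h1 : p.parts.filter (· = k+1) + p.parts.filter (fun a => ¬ a = k+1) = p.parts :=
      Multiset.filter_add_not _ _
    have h2 : p.parts.filter (· = k+1) = Multiset.replicate m (k+1) := by
      rw [Multiset.filter_eq', hcnt]
    have := congrArg Multiset.sum h1
    rw [Multiset.sum_add, h2, Multiset.sum_replicate, p.parts_sum] at this
    simp only [smul_eq_mul] at this
    have hcomm : (k+1)*m = m*(k+1) := mul_comm _ _
    show (Multiset.filter (fun a => ¬ a = k+1) p.parts).sum = n - (k+1)*m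
    omega
  case qpos =>
    intro i hi
    rcases Multiset.mem_add.mp hi with h | h
    · exact q.parts_pos h
    · rw [Multiset.eq_of_mem_replicate h]; omega
  case qsum =>
    rw [Multiset.sum_add, Multiset.sum_replicate, q.parts_sum]
    simp only [smul_eq_mul]
    have hcomm : (k+1)*m = m*(k+1) := mul_comm _ _
    omega
  case hi =>
    intro p hp
    simp only [mem_filter, mem_univ, true_and] at hp ⊢
    intro i hi
    rw [Multiset.mem_filter] at hi
    have := hp.1 i hi.1
    have := hi.2
    omega
  case hj =>
    intro q hq
    simp only [mem_filter, mem_univ, true_and] at hq ⊢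
    constructor
    · intro i hi
      rcases Multiset.mem_add.mp hi with h | h
      · exact le_trans (hq i h) (by omega)
      · rw [Multiset.eq_of_mem_replicate h]
    · rw [Multiset.count_add, Multiset.count_replicate_self,
        Multiset.count_eq_zero_of_notMem, zero_add]
      intro hmem
      exact absurd (hq _ hmem) (by omega)
  case li =>
    intro p hp
    simp only [mem_filter, mem_univ, true_and] at hp
    ext1
    simp only
    rw [show (Multiset.replicate m (k+1)) = p.parts.filter (· = k+1) by
      rw [Multiset.filter_eq', hp.2]]
    have : (p.parts.filter fun a => ¬ a = k+1) = p.parts.filter (· ≠ k+1) := rfl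
    rw [← this, add_comm, Multiset.filter_add_not]
  case ri =>
    intro q hq
    simp only [mem_filter, mem_univ, true_and] at hq
    ext1
    simp only
    rw [Multiset.filter_add]
    rw [Multiset.filter_eq_self.2 (fun a ha => by
      have := hq a ha; simp only [ne_eq, decide_not]; omega)]
    rw [Multiset.filter_eq_nil.2 (fun a ha => by
      rw [Multiset.eq_of_mem_replicate ha]; simp), add_zero]


lemma pow_sub_pow_le' (p : ℕ) {a b : ℝ} (ha : 0 ≤ a) (hab : a ≤ b) :
    b^(p+1) - a^(p+1) ≤ (p+1)*(b-a)*b^p := by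
  induction p with
  | zero => simp
  | succ p ih =>
    have hb : 0 ≤ b := le_trans ha hab
    have h1 : a^(p+1) ≤ b^(p+1) := pow_le_pow_left₀ ha hab (p+1)
    have h3 : b * (b^(p+1) - a^(p+1)) ≤ (↑p+1)*(b-a)*b^(p+1) := by
      calc b * (b^(p+1) - a^(p+1)) ≤ b * ((↑p+1)*(b-a)*b^p) := mul_le_mul_of_nonneg_left ih hb
        _ = (↑p+1)*(b-a)*(b^p * b) := by ring
        _ = (↑p+1)*(b-a)*b^(p+1) := by rw [← pow_succ]
    have h4 : (b-a)*a^(p+1) ≤ (b-a)*b^(p+1) :=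
      mul_le_mul_of_nonneg_left h1 (by linarith)
    have key : b^(p+1+1) - a^(p+1+1) = b*(b^(p+1)-a^(p+1)) + (b-a)*a^(p+1) := by ring
    push_cast
    linarith [h3, h4, key]

lemma le_pow_sub_pow' (p : ℕ) {a b : ℝ} (ha : 0 ≤ a) (hab : a ≤ b) :
    (p+1)*(b-a)*a^p ≤ b^(p+1) - a^(p+1) := by
  induction p with
  | zero => simp
  | succ p ih =>
    have hb : 0 ≤ b := le_trans ha hab
    have h3 : (↑p+1)*(b-a)*a^(p+1) ≤ b * (b^(p+1) - a^(p+1)) := by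
      have h5 : a * (b^(p+1) - a^(p+1)) ≤ b * (b^(p+1) - a^(p+1)) := by
        apply mul_le_mul_of_nonneg_right hab
        have := pow_le_pow_left₀ ha hab (p+1)
        linarith
      calc (↑p+1)*(b-a)*a^(p+1) = a * ((↑p+1)*(b-a)*a^p) := by rw [pow_succ]; ring
        _ ≤ a * (b^(p+1) - a^(p+1)) := mul_le_mul_of_nonneg_left ih ha
        _ ≤ b * (b^(p+1) - a^(p+1)) := h5
    have key : b^(p+1+1) - a^(p+1+1) = b*(b^(p+1)-a^(p+1)) + (b-a)*a^(p+1) := by ring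
    have h4 : (b-a)*a^(p+1) ≥ 0 := mul_nonneg (by linarith) (pow_nonneg ha _)
    push_cast
    linarith [h3, h4, key]

lemma sum_pow_le_int (d M : ℕ) : ∑ m ∈ range M, (m:ℝ)^d ≤ (M:ℝ)^(d+1)/(d+1) := by
  have hd : (0:ℝ) < d+1 := by positivity
  rw [le_div_iff₀ hd]
  have tele : ∑ m ∈ range M, (((m+1:ℕ):ℝ)^(d+1) - ((m:ℕ):ℝ)^(d+1)) = (M:ℝ)^(d+1) - 0 := by
    rw [Finset.sum_range_sub (f := fun m => ((m:ℕ):ℝ)^(d+1))]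
    norm_num
  have hle : ∀ m ∈ range M, (d+1:ℝ) * (m:ℝ)^d ≤ ((m+1:ℕ):ℝ)^(d+1) - ((m:ℕ):ℝ)^(d+1) := by
    intro m _
    have := le_pow_sub_pow' d (a := (m:ℝ)) (b := (m:ℝ)+1) (by positivity) (by linarith)
    push_cast
    push_cast at this
    nlinarith [this]
  calc (∑ m ∈ range M, (m:ℝ)^d) * ((d:ℝ)+1) = ∑ m ∈ range M, (d+1:ℝ) * (m:ℝ)^d := by
        rw [Finset.sum_mul]; exact Finset.sum_congr rfl fun m _ => by ring
    _ ≤ ∑ m ∈ range M, (((m+1:ℕ):ℝ)^(d+1) - ((m:ℕ):ℝ)^(d+1)) := Finset.sum_le_sum hle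
    _ = (M:ℝ)^(d+1) - 0 := tele
    _ = (M:ℝ)^(d+1) := by ring

lemma le_sum_pow_int (d M : ℕ) : (M:ℝ)^(d+1)/(d+1) ≤ ∑ m ∈ range (M+1), (m:ℝ)^d := by
  have hd : (0:ℝ) < d+1 := by positivity
  rw [div_le_iff₀ hd]
  have tele : ∑ m ∈ range M, (((m+1:ℕ):ℝ)^(d+1) - ((m:ℕ):ℝ)^(d+1)) = (M:ℝ)^(d+1) - 0 := by
    rw [Finset.sum_range_sub (f := fun m => ((m:ℕ):ℝ)^(d+1))]
    norm_num
  have hle : ∀ m ∈ range M, ((m+1:ℕ):ℝ)^(d+1) - ((m:ℕ):ℝ)^(d+1) ≤ (d+1:ℝ) * ((m+1:ℕ):ℝ)^d := by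
    intro m _
    have := pow_sub_pow_le' d (a := (m:ℝ)) (b := (m:ℝ)+1) (by positivity) (by linarith)
    push_cast
    push_cast at this
    nlinarith [this]
  calc (M:ℝ)^(d+1) = (M:ℝ)^(d+1) - 0 := by ring
    _ = ∑ m ∈ range M, (((m+1:ℕ):ℝ)^(d+1) - ((m:ℕ):ℝ)^(d+1)) := tele.symm
    _ ≤ ∑ m ∈ range M, (d+1:ℝ) * ((m+1:ℕ):ℝ)^d := Finset.sum_le_sum hle
    _ ≤ ∑ m ∈ range (M+1), (d+1:ℝ) * ((m:ℕ):ℝ)^d := by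
        rw [Finset.sum_range_succ' (fun m => (d+1:ℝ) * ((m:ℕ):ℝ)^d) M]
        have : (0:ℝ) ≤ (d+1:ℝ) * ((0:ℕ):ℝ)^d := by positivity
        push_cast
        push_cast at this
        linarith
    _ = (∑ m ∈ range (M+1), ((m:ℕ):ℝ)^d) * ((d:ℝ)+1) := by
        rw [Finset.sum_mul]; exact Finset.sum_congr rfl fun m _ => by ring


set_option maxHeartbeats 1000000 in
lemma sumB (j n K : ℕ) (hK : 2 ≤ K) (hn : 1 ≤ n) :
    |(∑ m ∈ range (n/K+1), ((n - K*m : ℕ):ℝ)^j) - (n:ℝ)^(j+1)/((K:ℝ)*((j:ℝ)+1))|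
      ≤ 2*(2*(K:ℝ)+1)^j * (n:ℝ)^j := by
  have hK0 : 0 < K := by omega
  set M := n / K with hM
  set r := n % K with hr
  have hdm : K * M + r = n := Nat.div_add_mod n K
  have hrK : r < K := Nat.mod_lt n hK0
  have hre : (∑ m ∈ range (M+1), ((n - K*m : ℕ):ℝ)^j)
      = ∑ i ∈ range (M+1), ((r + K*i : ℕ):ℝ)^j := by
    rw [← Finset.sum_range_reflect (fun m => ((n - K*m : ℕ):ℝ)^j) (M+1)]
    refine Finset.sum_congr rfl fun i hi => ?_
    rw [mem_range, Nat.lt_succ_iff] at hi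
    have h2 : K*i ≤ K*M := Nat.mul_le_mul_left _ hi
    have h1 : K*(M+1-1-i) = K*M - K*i := by simp [Nat.mul_sub]
    have harg : n - K*(M+1-1-i) = r + K*i := by omega
    rw [harg]
  rw [hre]
  have hjpos : (0:ℝ) < (j:ℝ)+1 := by positivity
  have hKR : (0:ℝ) < (K:ℝ) := by positivity
  have hden : (0:ℝ) < (K:ℝ)*((j:ℝ)+1) := by positivity
  have hnR : (1:ℝ) ≤ (n:ℝ) := by exact_mod_cast hn
  have hKM : (K:ℝ)*(M:ℝ) = (n:ℝ) - (r:ℝ) := by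
    have := congrArg (Nat.cast : ℕ → ℝ) hdm
    push_cast at this
    linarith
  -- lower bound
  have hlow : (n:ℝ)^(j+1)/((K:ℝ)*((j:ℝ)+1)) - (n:ℝ)^j
      ≤ ∑ i ∈ range (M+1), ((r + K*i : ℕ):ℝ)^j := by
    have step1 : (K:ℝ)^j * ((M:ℝ)^(j+1)/((j:ℝ)+1)) ≤ ∑ i ∈ range (M+1), ((r + K*i : ℕ):ℝ)^j := by
      calc (K:ℝ)^j * ((M:ℝ)^(j+1)/((j:ℝ)+1)) ≤ (K:ℝ)^j * ∑ i ∈ range (M+1), (i:ℝ)^j :=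
            mul_le_mul_of_nonneg_left (le_sum_pow_int j M) (by positivity)
        _ = ∑ i ∈ range (M+1), ((K:ℝ)*(i:ℝ))^j := by
            rw [Finset.mul_sum]; exact Finset.sum_congr rfl fun i _ => by rw [mul_pow]
        _ ≤ ∑ i ∈ range (M+1), ((r + K*i : ℕ):ℝ)^j := by
            refine Finset.sum_le_sum fun i _ => ?_
            apply pow_le_pow_left₀ (by positivity)
            push_cast; linarith [Nat.cast_nonneg (α := ℝ) r]
    have heq : (K:ℝ)^j * ((M:ℝ)^(j+1)/((j:ℝ)+1)) = ((n:ℝ)-(r:ℝ))^(j+1)/((K:ℝ)*((j:ℝ)+1)) := by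
      rw [← hKM, mul_pow]
      field_simp
      ring
    have hra : (0:ℝ) ≤ (n:ℝ) - (r:ℝ) := by rw [← hKM]; positivity
    have hrKR : (r:ℝ) ≤ (K:ℝ) := by exact_mod_cast hrK.le
    have hnj : (0:ℝ) ≤ (n:ℝ)^j := by positivity
    have hps : (n:ℝ)^(j+1) - ((n:ℝ)-(r:ℝ))^(j+1) ≤ ((j:ℝ)+1)*(K:ℝ)*(n:ℝ)^j := by
      have h := pow_sub_pow_le' j (a := (n:ℝ)-(r:ℝ)) (b := (n:ℝ)) hra
        (by linarith [Nat.cast_nonneg (α := ℝ) r])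
      calc (n:ℝ)^(j+1) - ((n:ℝ)-(r:ℝ))^(j+1) ≤ ((j:ℝ)+1)*((n:ℝ)-((n:ℝ)-(r:ℝ)))*(n:ℝ)^j := h
        _ = ((j:ℝ)+1)*(r:ℝ)*(n:ℝ)^j := by ring
        _ ≤ ((j:ℝ)+1)*(K:ℝ)*(n:ℝ)^j :=
            mul_le_mul_of_nonneg_right (mul_le_mul_of_nonneg_left hrKR hjpos.le) hnj
    have hdiv : (n:ℝ)^(j+1)/((K:ℝ)*((j:ℝ)+1)) - (n:ℝ)^j
        ≤ ((n:ℝ)-(r:ℝ))^(j+1)/((K:ℝ)*((j:ℝ)+1)) := by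
      rw [div_sub' (ne_of_gt hden), div_le_div_iff₀ hden hden]
      nlinarith [hps, hden]
    linarith [heq ▸ step1]
  -- upper bound
  have hup : ∑ i ∈ range (M+1), ((r + K*i : ℕ):ℝ)^j
      ≤ (n:ℝ)^(j+1)/((K:ℝ)*((j:ℝ)+1)) + 2*(2*(K:ℝ)+1)^j * (n:ℝ)^j := by
    have step1 : ∑ i ∈ range (M+1), ((r + K*i : ℕ):ℝ)^j
        ≤ (K:ℝ)^j * (((M:ℝ)+2)^(j+1)/((j:ℝ)+1)) := by
      calc ∑ i ∈ range (M+1), ((r + K*i : ℕ):ℝ)^j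
          ≤ ∑ i ∈ range (M+1), ((K:ℝ)*((i:ℝ)+1))^j := by
            refine Finset.sum_le_sum fun i _ => ?_
            apply pow_le_pow_left₀ (by positivity)
            push_cast
            have : (r:ℝ) + 1 ≤ (K:ℝ) := by exact_mod_cast hrK
            linarith
        _ = (K:ℝ)^j * ∑ i ∈ range (M+1), ((i:ℝ)+1)^j := by
            rw [Finset.mul_sum]; exact Finset.sum_congr rfl fun i _ => by rw [mul_pow]
        _ ≤ (K:ℝ)^j * ∑ i ∈ range (M+2), (i:ℝ)^j := by
            apply mul_le_mul_of_nonneg_left _ (by positivity)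
            rw [Finset.sum_range_succ' (fun i => ((i:ℕ):ℝ)^j) (M+1)]
            have h0 : (0:ℝ) ≤ ((0:ℕ):ℝ)^j := by positivity
            push_cast
            push_cast at h0
            linarith
        _ ≤ (K:ℝ)^j * (((M+2:ℕ):ℝ)^(j+1)/((j:ℝ)+1)) :=
            mul_le_mul_of_nonneg_left (sum_pow_le_int j (M+2)) (by positivity)
        _ = (K:ℝ)^j * (((M:ℝ)+2)^(j+1)/((j:ℝ)+1)) := by push_cast; ring_nf
    have hKM2 : (K:ℝ)*((M:ℝ)+2) ≤ (n:ℝ) + 2*(K:ℝ) := by nlinarith [hKM, Nat.cast_nonneg (α := ℝ) r]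
    have heq : (K:ℝ)^j * (((M:ℝ)+2)^(j+1)/((j:ℝ)+1))
        = ((K:ℝ)*((M:ℝ)+2))^(j+1)/((K:ℝ)*((j:ℝ)+1)) := by
      rw [mul_pow]
      field_simp
      ring
    have hbig : ((K:ℝ)*((M:ℝ)+2))^(j+1) ≤ ((n:ℝ)+2*(K:ℝ))^(j+1) :=
      pow_le_pow_left₀ (by positivity) hKM2 _
    have hps : ((n:ℝ)+2*(K:ℝ))^(j+1) ≤ (n:ℝ)^(j+1) + ((j:ℝ)+1)*(2*(K:ℝ))*((2*(K:ℝ)+1)*(n:ℝ))^j := by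
      have h := pow_sub_pow_le' j (a := (n:ℝ)) (b := (n:ℝ)+2*(K:ℝ)) (by positivity) (by linarith)
      have hmono : ((n:ℝ)+2*(K:ℝ))^j ≤ ((2*(K:ℝ)+1)*(n:ℝ))^j := by
        apply pow_le_pow_left₀ (by positivity)
        nlinarith
      nlinarith [h, hmono, mul_nonneg (mul_nonneg (by positivity : (0:ℝ) ≤ (j:ℝ)+1)
        (by positivity : (0:ℝ) ≤ 2*(K:ℝ))) (pow_nonneg (by positivity : (0:ℝ) ≤ (n:ℝ)+2*(K:ℝ)) j)]
    have hmp : ((2*(K:ℝ)+1)*(n:ℝ))^j = (2*(K:ℝ)+1)^j * (n:ℝ)^j := mul_pow _ _ _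
    have hr2 : ((n:ℝ)^(j+1)/((K:ℝ)*((j:ℝ)+1)) + 2*(2*(K:ℝ)+1)^j * (n:ℝ)^j) * ((K:ℝ)*((j:ℝ)+1))
        = (n:ℝ)^(j+1) + ((j:ℝ)+1)*(2*(K:ℝ))*((2*(K:ℝ)+1)^j * (n:ℝ)^j) := by
      field_simp
    have hfinal : ((n:ℝ)+2*(K:ℝ))^(j+1)/((K:ℝ)*((j:ℝ)+1))
        ≤ (n:ℝ)^(j+1)/((K:ℝ)*((j:ℝ)+1)) + 2*(2*(K:ℝ)+1)^j * (n:ℝ)^j := by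
      rw [div_le_iff₀ hden, hr2]
      rw [hmp] at hps
      linarith
    calc ∑ i ∈ range (M+1), ((r + K*i : ℕ):ℝ)^j
        ≤ (K:ℝ)^j * (((M:ℝ)+2)^(j+1)/((j:ℝ)+1)) := step1
      _ = ((K:ℝ)*((M:ℝ)+2))^(j+1)/((K:ℝ)*((j:ℝ)+1)) := heq
      _ ≤ ((n:ℝ)+2*(K:ℝ))^(j+1)/((K:ℝ)*((j:ℝ)+1)) := by
          rw [div_le_div_iff₀ hden hden]
          exact mul_le_mul_of_nonneg_right hbig hden.le
      _ ≤ _ := hfinal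
  rw [abs_le]
  have hone : (1:ℝ) ≤ (2*(K:ℝ)+1)^j := one_le_pow₀ (by linarith)
  have hnj : (0:ℝ) ≤ (n:ℝ)^j := by positivity
  have haux : (1:ℝ)*(n:ℝ)^j ≤ (2*(K:ℝ)+1)^j*(n:ℝ)^j := mul_le_mul_of_nonneg_right hone hnj
  have haux2 : (0:ℝ) ≤ (2*(K:ℝ)+1)^j*(n:ℝ)^j := mul_nonneg (by positivity) hnj
  constructor
  · linarith [hlow, haux, haux2]
  · linarith [hup]


lemma Nk_asymp : ∀ j : ℕ, 1 ≤ j → ∃ C : ℝ, 0 < C ∧ ∀ n : ℕ, 1 ≤ n →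
    |(Nk (j+1) n : ℝ) - (n:ℝ)^j / ((Nat.factorial (j+1) : ℝ) * (Nat.factorial j : ℝ))|
      ≤ C * (n:ℝ)^(j-1) := by
  refine Nat.le_induction ?_ ?_
  · -- base case j = 1
    refine ⟨1, one_pos, fun n hn => ?_⟩
    have h2 : Nk 2 n = n/2 + 1 := by
      have h := Nk_succ 1 n
      simp only [Nk_one] at h
      simpa using h
    have hd := Nat.div_add_mod n 2
    have hdR : 2*((n/2:ℕ):ℝ) + ((n%2:ℕ):ℝ) = (n:ℝ) := by exact_mod_cast hd
    have hs0 : (0:ℝ) ≤ ((n%2:ℕ):ℝ) := Nat.cast_nonneg _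
    have hs1 : ((n%2:ℕ):ℝ) ≤ 1 := by
      have : n % 2 ≤ 1 := by omega
      exact_mod_cast this
    show |(Nk 2 n : ℝ) - (n:ℝ)^1 / ((Nat.factorial 2 : ℝ) * (Nat.factorial 1 : ℝ))| ≤ 1 * (n:ℝ)^0
    rw [h2]
    simp only [Nat.factorial, pow_one, pow_zero, mul_one, one_mul]
    push_cast
    rw [abs_le]
    norm_num
    constructor <;> linarith
  · -- inductive step
    intro j hj IH
    obtain ⟨C, hC0, hC⟩ := IH
    set K := j + 2 with hK
    set cF : ℝ := (Nat.factorial (j+1) : ℝ) * (Nat.factorial j : ℝ) with hcF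
    have hcF1 : (1:ℝ) ≤ cF := by
      rw [hcF]
      have h1 : 1 ≤ Nat.factorial (j+1) := Nat.one_le_iff_ne_zero.mpr (Nat.factorial_ne_zero _)
      have h2 : 1 ≤ Nat.factorial j := Nat.one_le_iff_ne_zero.mpr (Nat.factorial_ne_zero _)
      have h1R : (1:ℝ) ≤ (Nat.factorial (j+1) : ℝ) := by exact_mod_cast h1
      have h2R : (1:ℝ) ≤ (Nat.factorial j : ℝ) := by exact_mod_cast h2
      nlinarith
    have hcF0 : (0:ℝ) < cF := lt_of_lt_of_le one_pos hcF1
    -- helper bound valid for all x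
    have helper : ∀ x : ℕ, |(Nk (j+1) x : ℝ) - (x:ℝ)^j / cF| ≤ C*(x:ℝ)^(j-1) + 1 := by
      intro x
      rcases Nat.eq_zero_or_pos x with rfl | hx
      · rw [Nk_zero]
        have h0 : (0:ℝ) ≤ C*((0:ℕ):ℝ)^(j-1) := by positivity
        push_cast at h0 ⊢
        rw [zero_pow (show j ≠ 0 by omega)]
        simp only [zero_div, sub_zero, abs_one]
        linarith
      · have := hC x hx
        linarith [this, abs_nonneg ((Nk (j+1) x : ℝ) - (x:ℝ)^j / cF)]
    refine ⟨2*(C+1) + 2*(2*(K:ℝ)+1)^j, by positivity, fun n hn => ?_⟩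
    have hnR : (1:ℝ) ≤ (n:ℝ) := by exact_mod_cast hn
    -- recurrence
    have hrec : (Nk (K) n : ℝ) = ∑ m ∈ range (n/K+1), (Nk (j+1) (n - K*m) : ℝ) := by
      rw [show K = (j+1)+1 from rfl, Nk_succ (j+1) n]
      push_cast
      rfl
    set M := n / K with hM
    set B : ℝ := ∑ m ∈ range (M+1), ((n - K*m : ℕ):ℝ)^j with hB
    -- step (i)
    have hi : |(Nk K n : ℝ) - B / cF| ≤ 2*(C+1) * (n:ℝ)^j := by
      rw [hrec, hB, Finset.sum_div, ← Finset.sum_sub_distrib]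
      refine le_trans (Finset.abs_sum_le_sum_abs _ _) ?_
      have hbound : ∀ m ∈ range (M+1),
          |(Nk (j+1) (n - K*m) : ℝ) - ((n - K*m : ℕ):ℝ)^j / cF| ≤ C*(n:ℝ)^(j-1) + 1 := by
        intro m _
        refine le_trans (helper (n - K*m)) ?_
        have hle : ((n - K*m : ℕ):ℝ) ≤ (n:ℝ) := by
          have : n - K*m ≤ n := Nat.sub_le _ _
          exact_mod_cast this
        have : ((n - K*m : ℕ):ℝ)^(j-1) ≤ (n:ℝ)^(j-1) :=
          pow_le_pow_left₀ (Nat.cast_nonneg _) hle _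
        nlinarith
      refine le_trans (Finset.sum_le_sum hbound) ?_
      rw [Finset.sum_const, Finset.card_range, nsmul_eq_mul]
      have hM1 : ((M:ℝ)+1) ≤ 2*(n:ℝ) := by
        have : M ≤ n := Nat.div_le_self _ _
        have : (M:ℝ) ≤ (n:ℝ) := by exact_mod_cast this
        linarith
      have h1n : (1:ℝ) ≤ (n:ℝ)^(j-1) := one_le_pow₀ hnR
      have hpow : (n:ℝ)*(n:ℝ)^(j-1) = (n:ℝ)^j := by
        rw [← pow_succ']
        congr 1
        omega
      have step : C*(n:ℝ)^(j-1) + 1 ≤ (C+1)*(n:ℝ)^(j-1) := by nlinarith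
      calc ((M+1:ℕ):ℝ) * (C*(n:ℝ)^(j-1) + 1) ≤ (2*(n:ℝ)) * ((C+1)*(n:ℝ)^(j-1)) := by
            push_cast
            have h0 : (0:ℝ) ≤ C*(n:ℝ)^(j-1) + 1 := by positivity
            have h0' : (0:ℝ) ≤ 2*(n:ℝ) := by linarith
            push_cast at hM1
            nlinarith [step, hM1, h0, h0']
        _ = 2*(C+1) * ((n:ℝ)*(n:ℝ)^(j-1)) := by ring
        _ = 2*(C+1) * (n:ℝ)^j := by rw [hpow]
    -- step (ii)
    have hii : |B / cF - (n:ℝ)^(j+1)/((Nat.factorial (K) : ℝ) * (Nat.factorial (j+1) : ℝ))|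
        ≤ 2*(2*(K:ℝ)+1)^j * (n:ℝ)^j := by
      have hnat : Nat.factorial K * Nat.factorial (j+1)
          = (K*(j+1)) * (Nat.factorial (j+1) * Nat.factorial j) := by
        have h1 : Nat.factorial K = K * Nat.factorial (j+1) := Nat.factorial_succ (j+1)
        have h2 : Nat.factorial (j+1) = (j+1) * Nat.factorial j := Nat.factorial_succ j
        rw [h1, h2]
        ring
      have hfact : (Nat.factorial K : ℝ) * (Nat.factorial (j+1) : ℝ) = ((K:ℝ)*((j:ℝ)+1)) * cF := by
        have := congrArg (Nat.cast : ℕ → ℝ) hnat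
        push_cast at this
        rw [hcF]
        push_cast
        linarith
      rw [hfact]
      have hrw : (n:ℝ)^(j+1)/(((K:ℝ)*((j:ℝ)+1)) * cF) = ((n:ℝ)^(j+1)/((K:ℝ)*((j:ℝ)+1))) / cF := by
        rw [div_div]
      rw [hrw, div_sub_div_same, abs_div, abs_of_pos hcF0]
      have hsb := sumB j n K (by omega) hn
      have : |B - (n:ℝ)^(j+1)/((K:ℝ)*((j:ℝ)+1))| ≤ 2*(2*(K:ℝ)+1)^j * (n:ℝ)^j := hsb
      calc |B - (n:ℝ)^(j+1)/((K:ℝ)*((j:ℝ)+1))| / cF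
          ≤ |B - (n:ℝ)^(j+1)/((K:ℝ)*((j:ℝ)+1))| / 1 := by
            apply div_le_div_of_nonneg_left (abs_nonneg _) one_pos hcF1
        _ = |B - (n:ℝ)^(j+1)/((K:ℝ)*((j:ℝ)+1))| := div_one _
        _ ≤ _ := this
    -- combine
    have htri := abs_sub_le ((Nk K n : ℝ)) (B/cF)
      ((n:ℝ)^(j+1)/((Nat.factorial K : ℝ) * (Nat.factorial (j+1) : ℝ)))
    show |(Nk (j+1+1) n : ℝ) - (n:ℝ)^(j+1) / ((Nat.factorial (j+1+1) : ℝ) * (Nat.factorial (j+1) : ℝ))|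
        ≤ (2*(C+1) + 2*(2*(K:ℝ)+1)^j) * (n:ℝ)^(j+1-1)
    have hexp : j+1-1 = j := by omega
    rw [hexp]
    have : |(Nk K n : ℝ) - (n:ℝ)^(j+1)/((Nat.factorial K : ℝ) * (Nat.factorial (j+1) : ℝ))|
        ≤ 2*(C+1) * (n:ℝ)^j + 2*(2*(K:ℝ)+1)^j * (n:ℝ)^j := le_trans htri (by linarith [hi, hii])
    calc |(Nk K n : ℝ) - (n:ℝ)^(j+1)/((Nat.factorial K : ℝ) * (Nat.factorial (j+1) : ℝ))|
        ≤ 2*(C+1) * (n:ℝ)^j + 2*(2*(K:ℝ)+1)^j * (n:ℝ)^j := this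
      _ = (2*(C+1) + 2*(2*(K:ℝ)+1)^j) * (n:ℝ)^j := by ring


/-- For fixed `k ≥ 2`, the number of partitions of `n` into parts of size at most `k`
equals `n^{k−1}/(k!·(k−1)!) + O(n^{k−2})`. -/
theorem stmt_16 (k : ℕ) (hk : 2 ≤ k) :
    ∃ C : ℝ, 0 < C ∧ ∀ n : ℕ, 1 ≤ n →
      |(Set.ncard {p : n.Partition | ∀ i ∈ p.parts, i ≤ k} : ℝ)
          - (n : ℝ) ^ (k - 1) / ((Nat.factorial k : ℝ) * (Nat.factorial (k - 1) : ℝ))|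
        ≤ C * (n : ℝ) ^ (k - 2) := by
  obtain ⟨j, rfl⟩ : ∃ j, k = j + 1 := ⟨k - 1, by omega⟩
  have hj : 1 ≤ j := by omega
  obtain ⟨C, hC0, hC⟩ := Nk_asymp j hj
  refine ⟨C, hC0, fun n hn => ?_⟩
  have h := hC n hn
  rw [ncard_eq_Nk]
  have e1 : j + 1 - 1 = j := by omega
  have e2 : j + 1 - 2 = j - 1 := by omega
  rw [e1, e2]
  exact h
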